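/- Let p > 2 be a prime, ζ a primitive p-th root of unity, and π = (1-ζ) the prime ideal of ℤ[ζ] above p. If α, β ∈ ℤ[ζ] satisfy α ≢ 0 mod π and α ≡ β mod π, then α^p ≡ β^p mod π^(p+1). -/

import Mathlib

set_option maxHeartbeats 1000000
set_option synthInstance.maxHeartbeats 200000


open NumberField

lemma binom_aux {R : Type*} [CommRing R] {m : ℕ} (hp : (m + 3).Prime) (b x : R) :
    ((m + 3 : ℕ) : R) * x ^ 2 ∣
      (b + x) ^ (m + 3) - b ^ (m + 3) - ((m + 3 : ℕ) : R) * b ^ (m + 2) * x - x ^ (m + 3) := by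
  have h : (b + x) ^ (m + 3) - b ^ (m + 3) - ((m + 3 : ℕ) : R) * b ^ (m + 2) * x - x ^ (m + 3) =
      ∑ k ∈ Finset.range (m + 1),
        b ^ (k + 1) * x ^ (m + 3 - (k + 1)) * ((m + 3).choose (k + 1) : R) := by
    rw [add_pow, Finset.sum_range_succ, Finset.sum_range_succ, Finset.sum_range_succ',
      Nat.choose_self, Nat.choose_succ_self_right, Nat.sub_self,
      show m + 3 - (m + 2) = 1 from by omega]
    simp only [pow_zero, pow_one, Nat.choose_zero_right, Nat.cast_one, Nat.sub_zero,
      Nat.cast_add, Nat.cast_ofNat, one_mul, mul_one]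
    ring
  rw [h]
  refine Finset.dvd_sum fun k hk => ?_
  have hkm : k ≤ m := by simpa [Nat.lt_succ_iff] using hk
  obtain ⟨c, hc⟩ := hp.dvd_choose_self (Nat.succ_ne_zero k) (by omega : k + 1 < m + 3)
  rw [show m + 3 - (k + 1) = 2 + (m - k) from by omega, pow_add, hc]
  exact ⟨b ^ (k + 1) * x ^ (m - k) * c, by push_cast; ring⟩

theorem stmt0 (p : ℕ+) (hp : (p : ℕ).Prime) (hp2 : 2 < (p : ℕ))
    {K : Type*} [Field K] [NumberField K] [IsCyclotomicExtension {(p : ℕ)} ℚ K]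
    (ζ : 𝓞 K) (hζ : IsPrimitiveRoot ζ (p : ℕ))
    (α β : 𝓞 K)
    (hα : α ∉ Ideal.span {1 - ζ})
    (hαβ : α - β ∈ Ideal.span {1 - ζ}) :
    α ^ (p : ℕ) - β ^ (p : ℕ) ∈ (Ideal.span {1 - ζ}) ^ ((p : ℕ) + 1) := by
  haveI : Fact (p : ℕ).Prime := ⟨hp⟩
  obtain ⟨m, hm⟩ : ∃ m, (p : ℕ) = m + 3 := ⟨(p : ℕ) - 3, by omega⟩
  -- basic facts about ζ
  have hζK : IsPrimitiveRoot (algebraMap (𝓞 K) K ζ) p :=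
    hζ.map_of_injective RingOfIntegers.coe_injective
  have htoInt : hζK.toInteger = ζ := rfl
  have hζne1 : ζ ≠ 1 := hζ.ne_one (show 1 < (p:ℕ) by omega)
  have hlamne : (1 : 𝓞 K) - ζ ≠ 0 := sub_ne_zero.mpr (Ne.symm hζne1)
  have hPrime : Prime (ζ - 1) := by
    have := hζK.zeta_sub_one_prime'
    rwa [htoInt] at this
  have hPrimeLam : Prime ((1 : 𝓞 K) - ζ) := by
    have := hPrime.neg
    rwa [neg_sub] at this
  have hspan : Ideal.span {ζ - 1} = Ideal.span {(1 : 𝓞 K) - ζ} := by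
    rw [← Ideal.span_singleton_neg (ζ - 1), neg_sub]
  -- the quotient field
  have hIprime : (Ideal.span {(1 : 𝓞 K) - ζ}).IsPrime :=
    (Ideal.span_singleton_prime hlamne).2 hPrimeLam
  have hIbot : Ideal.span {(1 : 𝓞 K) - ζ} ≠ ⊥ := by
    simpa [Ideal.span_singleton_eq_bot] using hlamne
  haveI hImax : (Ideal.span {(1 : 𝓞 K) - ζ}).IsMaximal := hIprime.isMaximal hIbot
  have hp1 : (1 : ℕ+) < p := by
    rw [← PNat.coe_lt_coe, PNat.one_coe]
    omega
  have hpne2 : p ≠ 2 := by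
    intro h
    rw [h] at hp2
    simp at hp2
  haveI hfin : Finite (𝓞 K ⧸ Ideal.span {(1 : 𝓞 K) - ζ}) := by
    have := hζK.finite_quotient_toInteger_sub_one hp1
    rwa [htoInt, hspan] at this
  letI : Fintype (𝓞 K ⧸ Ideal.span {(1 : 𝓞 K) - ζ}) := Fintype.ofFinite _
  letI : Field (𝓞 K ⧸ Ideal.span {(1 : 𝓞 K) - ζ}) :=
    Ideal.Quotient.field (Ideal.span {(1 : 𝓞 K) - ζ})
  have hcard : Fintype.card (𝓞 K ⧸ Ideal.span {(1 : 𝓞 K) - ζ}) = (p : ℕ) := by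
    have h1 := hζK.card_quotient_toInteger_sub_one
    have hnorm := hζK.norm_toInteger_sub_one_of_prime_ne_two' (by omega : (p : ℕ) ≠ 2)
    rw [htoInt, hspan] at h1
    rw [htoInt] at hnorm
    rw [← Nat.card_eq_fintype_card, h1, hnorm]
    simp
  -- Fermat: lam ∣ x^p - x
  have hFermat : ∀ x : 𝓞 K, ((1 : 𝓞 K) - ζ) ∣ x ^ (m + 3) - x := by
    intro x
    have h1 := FiniteField.pow_card (Ideal.Quotient.mk (Ideal.span {(1 : 𝓞 K) - ζ}) x)
    rw [hcard, hm] at h1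
    rw [← Ideal.mem_span_singleton, ← Ideal.Quotient.eq_zero_iff_mem, map_sub, map_pow, h1,
      sub_self]
  -- the product formula
  have hζ' : IsPrimitiveRoot ζ (m + 2 + 1) := by
    have := hζ
    rw [hm, show m + 3 = m + 2 + 1 from by omega] at this
    exact this
  set Gval : 𝓞 K := ∏ k ∈ Finset.range (m + 2), ∑ j ∈ Finset.range (k + 1), ζ ^ j with hGval
  have hGeq : ((m + 3 : ℕ) : 𝓞 K) = (1 - ζ) ^ (m + 2) * Gval := by
    have hfac : ∀ k : ℕ, (1 - ζ) * (∑ j ∈ Finset.range (k + 1), ζ ^ j) = 1 - ζ ^ (k + 1) := by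
      intro k
      linear_combination -geom_sum_mul ζ (k + 1)
    calc ((m + 3 : ℕ) : 𝓞 K) = ((m + 2 : ℕ) : 𝓞 K) + 1 := by push_cast; ring
      _ = ∏ k ∈ Finset.range (m + 2), (1 - ζ ^ (k + 1)) := (hζ'.prod_one_sub_pow_eq_order).symm
      _ = ∏ k ∈ Finset.range (m + 2), ((1 - ζ) * ∑ j ∈ Finset.range (k + 1), ζ ^ j) :=
          Finset.prod_congr rfl fun k _ => (hfac k).symm
      _ = (1 - ζ) ^ (m + 2) * Gval := by
          rw [Finset.prod_mul_distrib, Finset.prod_const, Finset.card_range]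
  have hlamdvdp : ((1 : 𝓞 K) - ζ) ∣ ((m + 3 : ℕ) : 𝓞 K) :=
    ⟨(1 - ζ) ^ (m + 1) * Gval, by rw [hGeq]; ring⟩
  -- Wilson's theorem
  have hwilson : (m + 3) ∣ Nat.factorial (m + 2) + 1 := by
    haveI : Fact (m + 3).Prime := ⟨hm ▸ hp⟩
    have h := ZMod.wilsons_lemma (p := m + 3)
    rw [show m + 3 - 1 = m + 2 from by omega] at h
    have h0 : ((Nat.factorial (m + 2) + 1 : ℕ) : ZMod (m + 3)) = 0 := by push_cast; rw [h]; ring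
    exact (ZMod.natCast_eq_zero_iff _ _).1 h0
  -- Gval ≡ (m+2)! mod λ
  have hG : ((1 : 𝓞 K) - ζ) ∣ Gval - ((Nat.factorial (m + 2) : ℕ) : 𝓞 K) := by
    rw [← Ideal.mem_span_singleton, ← Ideal.Quotient.eq_zero_iff_mem, map_sub, map_prod,
      map_natCast]
    have hζ1 : Ideal.Quotient.mk (Ideal.span {(1 : 𝓞 K) - ζ}) ζ = 1 := by
      have : Ideal.Quotient.mk (Ideal.span {(1 : 𝓞 K) - ζ}) ζ =
          Ideal.Quotient.mk (Ideal.span {(1 : 𝓞 K) - ζ}) 1 := by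
        rw [Ideal.Quotient.eq]
        rw [hspan.symm]
        exact Ideal.mem_span_singleton_self _
      simpa using this
    have hS : ∀ k ∈ Finset.range (m + 2),
        Ideal.Quotient.mk (Ideal.span {(1 : 𝓞 K) - ζ}) (∑ j ∈ Finset.range (k + 1), ζ ^ j) =
          ((k + 1 : ℕ) : 𝓞 K ⧸ Ideal.span {(1 : 𝓞 K) - ζ}) := by
      intro k _
      rw [map_sum]
      simp [map_pow, hζ1]
    rw [Finset.prod_congr rfl hS, ← Nat.cast_prod, Finset.prod_range_add_one_eq_factorial,
      sub_self]
  -- key divisibility : lam^(m+3) dvd p + lam^(m+2)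
  have hkey : ((1 : 𝓞 K) - ζ) ^ (m + 3) ∣ ((m + 3 : ℕ) : 𝓞 K) + (1 - ζ) ^ (m + 2) := by
    have h2 : ((1 : 𝓞 K) - ζ) ∣ ((Nat.factorial (m + 2) : ℕ) : 𝓞 K) + 1 := by
      obtain ⟨t, ht⟩ := hwilson
      refine dvd_trans hlamdvdp ⟨(t : 𝓞 K), ?_⟩
      have h3 : ((Nat.factorial (m + 2) + 1 : ℕ) : 𝓞 K) = (((m + 3) * t : ℕ) : 𝓞 K) := by
        exact_mod_cast ht
      push_cast at h3 ⊢
      linear_combination h3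
    have h1 : ((1 : 𝓞 K) - ζ) ∣ Gval + 1 := by
      have he : Gval + 1 = (Gval - ((Nat.factorial (m + 2) : ℕ) : 𝓞 K)) + (((Nat.factorial (m + 2) : ℕ) : 𝓞 K) + 1) := by
        ring
      rw [he]
      exact dvd_add hG h2
    obtain ⟨w, hw⟩ := h1
    exact ⟨w, by linear_combination hGeq + (1 - ζ) ^ (m + 2) * hw⟩
  -- setting up the main computation
  rw [Ideal.mem_span_singleton] at hαβ
  rw [Ideal.mem_span_singleton] at hα
  obtain ⟨γ, hγ⟩ := hαβ
  have hβ : ¬ ((1 : 𝓞 K) - ζ) ∣ β := by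
    intro h
    exact hα (by
      have : α = (1 - ζ) * γ + β := by linear_combination hγ
      rw [this]
      exact dvd_add (Dvd.intro γ rfl) h)
  have hβ1 : ((1 : 𝓞 K) - ζ) ∣ β ^ (m + 2) - 1 := by
    have h1 : ((1 : 𝓞 K) - ζ) ∣ β * (β ^ (m + 2) - 1) := by
      have : β * (β ^ (m + 2) - 1) = β ^ (m + 3) - β := by ring
      rw [this]
      exact hFermat β
    exact (hPrimeLam.dvd_or_dvd h1).resolve_left hβ
  have h2 : ((1 : 𝓞 K) - ζ) ∣ γ ^ (m + 3) - β ^ (m + 2) * γ := by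
    have he : γ ^ (m + 3) - β ^ (m + 2) * γ = (γ ^ (m + 3) - γ) - γ * (β ^ (m + 2) - 1) := by
      ring
    rw [he]
    exact dvd_sub (hFermat γ) (Dvd.dvd.mul_left hβ1 γ)
  -- final computation
  rw [hm, Ideal.span_singleton_pow, Ideal.mem_span_singleton]
  have hbin := binom_aux (hm ▸ hp) β ((1 - ζ) * γ)
  have hαeq : α = β + (1 - ζ) * γ := by linear_combination hγ
  rw [← hαeq] at hbin
  simp only [mul_pow] at hbin
  obtain ⟨E, hE⟩ := hbin
  obtain ⟨c, hc⟩ := hkey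
  obtain ⟨d, hd⟩ := h2
  refine ⟨Gval * γ ^ 2 * E + c * β ^ (m + 2) * γ + d, ?_⟩
  linear_combination hE + (1 - ζ) ^ 2 * γ ^ 2 * E * hGeq + (1 - ζ) * γ * β ^ (m + 2) * hc +
    (1 - ζ) ^ (m + 3) * hd
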